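/- Morse–Bott implies Łojasiewicz exponent one half (finite-dimensional version): Let U ⊂ ℝ^d be an open neighborhood of 0 and f : U → ℝ a C³ function with f(0) = 0, f'(0) = 0, such that after a C¹ change of coordinates Φ with Φ(0) = 0, f(Φ(y)) = ½⟨y, A y⟩ for a symmetric matrix A. Then there exist a neighborhood U' of 0 and C > 0 such that ‖∇f(x)‖ ≥ C |f(x)|^{1/2} for all x ∈ U'. -/

import Mathlib

open scoped RealInnerProductSpace

private lemma quad_loja (d : ℕ)
    (A : EuclideanSpace ℝ (Fin d) →L[ℝ] EuclideanSpace ℝ (Fin d))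
    (hAsym : ∀ z w : EuclideanSpace ℝ (Fin d), ⟪A z, w⟫ = ⟪z, A w⟫) :
    ∃ c : ℝ, 0 < c ∧ ∀ y, |⟪y, A y⟫| ≤ c * ‖A y‖ ^ 2 := by
  set E := EuclideanSpace ℝ (Fin d)
  set K : Submodule ℝ E := LinearMap.ker (A : E →ₗ[ℝ] E) with hKdef
  set g : Kᗮ →ₗ[ℝ] E := A.toLinearMap.comp Kᗮ.subtype with hgdef
  have hginj : LinearMap.ker g = ⊥ := by
    rw [LinearMap.ker_eq_bot']
    intro z hz
    have hz1 : A (z : E) = 0 := hz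
    have hz2 : (z : E) ∈ Kᗮ := z.2
    have : ⟪(z : E), (z : E)⟫ = 0 :=
      (Submodule.mem_orthogonal K (z : E)).1 hz2 (z : E) hz1
    exact Subtype.ext (inner_self_eq_zero.1 this)
  obtain ⟨c₀, hc₀pos, hanti⟩ := g.exists_antilipschitzWith hginj
  have hbound : ∀ z : Kᗮ, ‖(z : E)‖ ≤ (c₀ : ℝ) * ‖A (z : E)‖ := by
    intro z
    have := hanti.le_mul_dist z 0
    simpa [dist_eq_norm, map_zero, hgdef] using this
  refine ⟨(c₀ : ℝ), by exact_mod_cast hc₀pos, fun y => ?_⟩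
  set p : E := (Submodule.orthogonalProjectionOnto K y : E)
  set q : E := (Submodule.orthogonalProjectionOnto Kᗮ y : E)
  have hyd : p + q = y := K.starProjection_add_starProjection_orthogonal y
  have hAp : A p = 0 := (Submodule.orthogonalProjectionOnto K y).2
  have hAy : A y = A q := by rw [← hyd, map_add, hAp, zero_add]
  have hinner : ⟪y, A y⟫ = ⟪q, A q⟫ := by
    rw [hAy, ← hyd, inner_add_left, ← hAsym p q, hAp, inner_zero_left, zero_add]
  have hq : ‖q‖ ≤ (c₀ : ℝ) * ‖A q‖ := hbound (Submodule.orthogonalProjectionOnto Kᗮ y)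
  calc |⟪y, A y⟫| = |⟪q, A q⟫| := by rw [hinner]
    _ ≤ ‖q‖ * ‖A q‖ := abs_real_inner_le_norm q (A q)
    _ ≤ ((c₀ : ℝ) * ‖A q‖) * ‖A q‖ := by
        apply mul_le_mul_of_nonneg_right hq (norm_nonneg _)
    _ = (c₀ : ℝ) * ‖A y‖ ^ 2 := by rw [hAy]; ring

/-- Morse–Bott implies Łojasiewicz exponent one half (finite-dimensional version): if
`f : U → ℝ` is `C³` near `0 ∈ ℝᵈ` with `f(0) = 0`, `f'(0) = 0`, and there is a `C¹` change of
coordinates `Φ` with `Φ(0) = 0` bringing `f` to the quadratic normal form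
`f(Φ(y)) = ½⟨y, A y⟩` for a symmetric `A`, then there are a neighborhood `U'` of `0` and
`C > 0` with `‖∇f(x)‖ ≥ C |f(x)|^{1/2}` on `U'`. -/
theorem morse_bott_lojasiewicz_half_findim (d : ℕ)
    (U : Set (EuclideanSpace ℝ (Fin d))) (hU : IsOpen U)
    (h0U : (0 : EuclideanSpace ℝ (Fin d)) ∈ U)
    (f : EuclideanSpace ℝ (Fin d) → ℝ)
    (hf : ContDiffOn ℝ 3 f U) (hf0 : f 0 = 0) (hdf0 : fderiv ℝ f 0 = 0)
    (A : EuclideanSpace ℝ (Fin d) →L[ℝ] EuclideanSpace ℝ (Fin d))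
    (hAsym : ∀ z w : EuclideanSpace ℝ (Fin d), ⟪A z, w⟫ = ⟪z, A w⟫)
    (V : Set (EuclideanSpace ℝ (Fin d))) (hV : IsOpen V)
    (h0V : (0 : EuclideanSpace ℝ (Fin d)) ∈ V)
    (Φ : EuclideanSpace ℝ (Fin d) → EuclideanSpace ℝ (Fin d))
    (hΦ : ContDiffOn ℝ 1 Φ V) (hΦ0 : Φ 0 = 0)
    (hΦinj : Set.InjOn Φ V) (hΦU : Φ '' V ⊆ U) (hΦopen : IsOpen (Φ '' V))
    (M : ℝ) (hM : ∀ y ∈ V, ‖fderiv ℝ Φ y‖ ≤ M)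
    (hquad : ∀ y ∈ V, f (Φ y) = (1 / 2) * ⟪y, A y⟫) :
    ∃ U' ⊆ U, IsOpen U' ∧ (0 : EuclideanSpace ℝ (Fin d)) ∈ U' ∧
      ∃ C : ℝ, 0 < C ∧ ∀ x ∈ U', C * |f x| ^ ((1 : ℝ) / 2) ≤ ‖gradient f x‖ := by
  obtain ⟨c, hc, hcb⟩ := quad_loja d A hAsym
  set M' : ℝ := max M 1 with hM'def
  have hM'1 : (1 : ℝ) ≤ M' := le_max_right _ _
  have hM'pos : (0 : ℝ) < M' := lt_of_lt_of_le one_pos hM'1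
  set B : ℝ := (1 / 2) * c * M' ^ 2 with hBdef
  have hBpos : 0 < B := by positivity
  refine ⟨Φ '' V, hΦU, hΦopen, ⟨0, h0V, hΦ0⟩, (Real.sqrt B)⁻¹, by positivity, ?_⟩
  rintro x ⟨y, hy, rfl⟩
  have hxU : Φ y ∈ U := hΦU ⟨y, hy, rfl⟩
  -- differentiability
  have hfd : DifferentiableAt ℝ f (Φ y) :=
    (hf.contDiffAt (hU.mem_nhds hxU)).differentiableAt (by norm_num)
  have hΦd : DifferentiableAt ℝ Φ y :=
    (hΦ.contDiffAt (hV.mem_nhds hy)).differentiableAt one_ne_zero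
  -- chain rule
  have hcomp : HasFDerivAt (f ∘ Φ) ((fderiv ℝ f (Φ y)).comp (fderiv ℝ Φ y)) y :=
    hfd.hasFDerivAt.comp y hΦd.hasFDerivAt
  have hev : (fun z => (1 / 2 : ℝ) * ⟪z, A z⟫) =ᶠ[nhds y] (f ∘ Φ) := by
    filter_upwards [hV.mem_nhds hy] with z hz
    exact (hquad z hz).symm
  have hQ : HasFDerivAt (fun z => (1 / 2 : ℝ) * ⟪z, A z⟫)
      ((fderiv ℝ f (Φ y)).comp (fderiv ℝ Φ y)) y :=
    hcomp.congr_of_eventuallyEq hev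
  have hinner : HasFDerivAt (fun z : EuclideanSpace ℝ (Fin d) => ⟪z, A z⟫)
      ((fderivInnerCLM ℝ (y, A y)).comp ((ContinuousLinearMap.id ℝ _).prod A)) y :=
    (hasFDerivAt_id y).inner ℝ A.hasFDerivAt
  have hQ2 := hinner.const_mul (1 / 2 : ℝ)
  have heq := hQ2.unique hQ
  have hval : ((1 / 2 : ℝ) • ((fderivInnerCLM ℝ (y, A y)).comp
      ((ContinuousLinearMap.id ℝ _).prod A))) (A y) = ‖A y‖ ^ 2 := by
    have h1 : ⟪y, A (A y)⟫ = ⟪A y, A y⟫ := (hAsym y (A y)).symm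
    simp only [ContinuousLinearMap.smul_apply, ContinuousLinearMap.comp_apply,
      ContinuousLinearMap.prod_apply, ContinuousLinearMap.id_apply, fderivInnerCLM_apply,
      smul_eq_mul]
    rw [h1, real_inner_self_eq_norm_sq]
    ring
  rw [heq] at hval
  -- bound ‖A y‖ by the gradient
  have hgradnorm : ‖gradient f (Φ y)‖ = ‖fderiv ℝ f (Φ y)‖ := by
    rw [gradient]
    exact (InnerProductSpace.toDual ℝ _).symm.norm_map _
  set F : ℝ := ‖fderiv ℝ f (Φ y)‖ with hFdef
  have hFnn : 0 ≤ F := norm_nonneg _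
  have hkey : ‖A y‖ ^ 2 ≤ F * (M' * ‖A y‖) := by
    rw [← hval]
    calc ((fderiv ℝ f (Φ y)).comp (fderiv ℝ Φ y)) (A y)
        ≤ ‖fderiv ℝ f (Φ y)‖ * ‖(fderiv ℝ Φ y) (A y)‖ := by
          exact le_trans (le_abs_self _) ((fderiv ℝ f (Φ y)).le_opNorm _)
      _ ≤ F * (M' * ‖A y‖) := by
          apply mul_le_mul_of_nonneg_left _ hFnn
          calc ‖(fderiv ℝ Φ y) (A y)‖ ≤ ‖fderiv ℝ Φ y‖ * ‖A y‖ := (fderiv ℝ Φ y).le_opNorm _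
            _ ≤ M' * ‖A y‖ := by
                apply mul_le_mul_of_nonneg_right _ (norm_nonneg _)
                exact le_trans (hM y hy) (le_max_left _ _)
  have hAyF : ‖A y‖ ≤ M' * F := by
    rcases eq_or_lt_of_le (norm_nonneg (A y)) with h0 | h0
    · rw [← h0]; positivity
    · nlinarith [h0]
  -- final estimate
  have hfx : |f (Φ y)| ≤ B * F ^ 2 := by
    rw [hquad y hy, abs_mul]
    calc |1 / 2| * |⟪y, A y⟫| ≤ (1 / 2) * (c * ‖A y‖ ^ 2) := by
          rw [abs_of_pos (by norm_num : (0:ℝ) < 1/2)]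
          exact mul_le_mul_of_nonneg_left (hcb y) (by norm_num)
      _ ≤ (1 / 2) * (c * (M' * F) ^ 2) := by
          apply mul_le_mul_of_nonneg_left _ (by norm_num)
          apply mul_le_mul_of_nonneg_left _ (le_of_lt hc)
          exact pow_le_pow_left₀ (norm_nonneg _) hAyF 2
      _ = B * F ^ 2 := by rw [hBdef]; ring
  rw [hgradnorm]
  rw [← Real.sqrt_eq_rpow]
  have hsq : Real.sqrt |f (Φ y)| ≤ Real.sqrt B * F := by
    calc Real.sqrt |f (Φ y)| ≤ Real.sqrt (B * F ^ 2) := Real.sqrt_le_sqrt hfx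
      _ = Real.sqrt B * F := by
          rw [Real.sqrt_mul (le_of_lt hBpos), Real.sqrt_sq hFnn]
  have hsB : 0 < Real.sqrt B := Real.sqrt_pos.2 hBpos
  calc (Real.sqrt B)⁻¹ * Real.sqrt |f (Φ y)| ≤ (Real.sqrt B)⁻¹ * (Real.sqrt B * F) :=
        mul_le_mul_of_nonneg_left hsq (by positivity)
    _ = F := by field_simp
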